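/- Let H be a Hilbert space, (v_i)_{i∈I} a family of operators on H such that each v_i* is an isometry (v_i v_i* = 1) and the ranges of the v_i* are pairwise orthogonal (v_i v_j* = 0 for i ≠ j). If Ω is a unit vector with v_iΩ = 0 for all i and the closed span of {v_{i₁}*⋯v_{i_n}*Ω : n ≥ 0} is all of H, then the sum ∑_i v_i* v_i converges in the strong operator topology to 1 − P_Ω, where P_Ω is the orthogonal projection onto the span of Ω. -/

import Mathlib

open scoped InnerProductSpace

/-- If `(v i)` is a family of operators on a Hilbert space `H` such that the
`v i *` are isometries with pairwise orthogonal ranges (`v i (v j)* = δ_{ij} 1`),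
`Ω` is a unit vector annihilated by every `v i` and cyclic for the family
`{v i *}`, then `∑ i (v i)* (v i)` converges in the strong operator topology
to `1 − P_Ω`, where `P_Ω` is the orthogonal projection onto `ℂ Ω`. -/
theorem sum_adjoint_mul_eq_one_sub_vacuum_projection
    {H : Type*} [NormedAddCommGroup H] [InnerProductSpace ℂ H]
    [CompleteSpace H] {I : Type*} [DecidableEq I] (v : I → H →L[ℂ] H)
    (hvv : ∀ i j : I, v i ∘L ContinuousLinearMap.adjoint (v j)
        = if i = j then 1 else 0)
    (Ω : H) (hΩ : ‖Ω‖ = 1) (hann : ∀ i, v i Ω = 0)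
    (hcyc : (Submodule.span ℂ
        {x : H | ∃ L : List I,
          x = (L.map fun i => ContinuousLinearMap.adjoint (v i)).prod Ω}
        ).topologicalClosure = ⊤) :
    ∀ x : H,
      HasSum (fun i : I => ContinuousLinearMap.adjoint (v i) (v i x))
        (x - ⟪Ω, x⟫_ℂ • Ω) := by
  set P : I → H → H := fun i x => ContinuousLinearMap.adjoint (v i) (v i x) with hP
  have hinner : ∀ (i j : I) (x y : H),
      ⟪P i x, P j y⟫_ℂ = if i = j then ⟪v i x, v j y⟫_ℂ else 0 := by
    intro i j x y
    have : ⟪P i x, P j y⟫_ℂ = ⟪v i x, (v i ∘L ContinuousLinearMap.adjoint (v j)) (v j y)⟫_ℂ := by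
      simp [hP, ContinuousLinearMap.adjoint_inner_left, ContinuousLinearMap.comp_apply]
    rw [this, hvv i j]
    split <;> simp
  -- uniform bound on partial sums
  have hbound : ∀ (F : Finset I) (x : H), ‖∑ i ∈ F, P i x‖ ≤ ‖x‖ := by
    intro F x
    set S := ∑ i ∈ F, P i x with hS
    have hSS : ⟪S, S⟫_ℂ = ∑ i ∈ F, ⟪v i x, v i x⟫_ℂ := by
      rw [hS, sum_inner]
      refine Finset.sum_congr rfl fun i hi => ?_
      rw [inner_sum, Finset.sum_eq_single i]
      · rw [hinner, if_pos rfl]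
      · intro j hj hji
        rw [hinner]; simp [Ne.symm hji]
      · intro h; exact absurd hi h
    have hxS : ⟪x, S⟫_ℂ = ∑ i ∈ F, ⟪v i x, v i x⟫_ℂ := by
      rw [hS, inner_sum]
      refine Finset.sum_congr rfl fun i hi => ?_
      simp [hP, ContinuousLinearMap.adjoint_inner_right]
    have h1 : ‖S‖ ^ 2 = RCLike.re ⟪x, S⟫_ℂ := by
      rw [← inner_self_eq_norm_sq (𝕜 := ℂ), hSS, hxS]
    have h2 : ‖S‖ ^ 2 ≤ ‖x‖ * ‖S‖ := h1 ▸ re_inner_le_norm x S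
    nlinarith [norm_nonneg S, norm_nonneg x]
  -- HasSum on the span
  have hspan : ∀ x ∈ Submodule.span ℂ
      {x : H | ∃ L : List I,
        x = (L.map fun i => ContinuousLinearMap.adjoint (v i)).prod Ω},
      HasSum (fun i : I => P i x) (x - ⟪Ω, x⟫_ℂ • Ω) := by
    intro x hx
    induction hx using Submodule.span_induction with
    | mem x hx =>
      obtain ⟨L, rfl⟩ := hx
      cases L with
      | nil =>
        simp only [List.map_nil, List.prod_nil, ContinuousLinearMap.one_apply]
        have h0 : (fun i : I => P i Ω) = fun _ => (0 : H) := by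
          funext i; simp [hP, hann i]
        rw [h0]
        have : Ω - ⟪Ω, Ω⟫_ℂ • Ω = 0 := by
          rw [inner_self_eq_norm_sq_to_K, hΩ]
          simp
        rw [this]
        exact hasSum_zero
      | cons j L' =>
        set y := (L'.map fun i => ContinuousLinearMap.adjoint (v i)).prod Ω with hy
        have hx : ((j :: L').map fun i => ContinuousLinearMap.adjoint (v i)).prod Ω
            = ContinuousLinearMap.adjoint (v j) y := by
          simp [hy, ContinuousLinearMap.comp_apply]
        rw [hx]
        have hfun : (fun i : I => P i (ContinuousLinearMap.adjoint (v j) y))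
            = fun i : I => if i = j then ContinuousLinearMap.adjoint (v j) y else 0 := by
          funext i
          have hvi : v i (ContinuousLinearMap.adjoint (v j) y)
              = (v i ∘L ContinuousLinearMap.adjoint (v j)) y := rfl
          rw [hP]
          simp only []
          rw [hvi, hvv i j]
          by_cases h : i = j
          · subst h; simp
          · simp [h]
        rw [hfun]
        have horth : ⟪Ω, ContinuousLinearMap.adjoint (v j) y⟫_ℂ = 0 := by
          rw [ContinuousLinearMap.adjoint_inner_right, hann j, inner_zero_left]
        rw [horth]
        simpa using hasSum_ite_eq j (ContinuousLinearMap.adjoint (v j) y)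
    | zero =>
      have h0 : (fun i : I => P i (0 : H)) = fun _ => (0 : H) := by
        funext i; simp [hP]
      rw [h0]
      simpa using (hasSum_zero : HasSum (fun _ : I => (0 : H)) 0)
    | add a b _ _ ha hb =>
      have h := ha.add hb
      have heq : (fun i : I => P i (a + b)) = fun i : I => P i a + P i b := by
        funext i; simp [hP]
      rw [heq]
      convert h using 1
      rw [inner_add_right, add_smul]
      abel
    | smul c a _ ha =>
      have h := ha.const_smul c
      have heq : (fun i : I => P i (c • a)) = fun i : I => c • P i a := by
        funext i; simp [hP]
      rw [heq]
      convert h using 1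
      rw [inner_smul_right, smul_sub, smul_smul]
  -- density argument
  intro x
  rw [HasSum, SummationFilter.unconditional_filter, Metric.tendsto_atTop]
  intro ε hε
  have hdense : Dense ((Submodule.span ℂ
      {x : H | ∃ L : List I,
        x = (L.map fun i => ContinuousLinearMap.adjoint (v i)).prod Ω} : Submodule ℂ H) : Set H) := by
    rw [← Submodule.dense_iff_topologicalClosure_eq_top] at hcyc
    exact hcyc
  have hx := hdense x
  rw [Metric.mem_closure_iff] at hx
  obtain ⟨y, hy, hxy⟩ := hx (ε / 4) (by linarith)
  rw [dist_eq_norm] at hxy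
  have hsum := hspan y hy
  rw [HasSum, SummationFilter.unconditional_filter, Metric.tendsto_atTop] at hsum
  obtain ⟨F₀, hF₀⟩ := hsum (ε / 4) (by linarith)
  refine ⟨F₀, fun F hF => ?_⟩
  have h1 : dist (∑ i ∈ F, P i x) (∑ i ∈ F, P i y) ≤ ‖x - y‖ := by
    rw [dist_eq_norm]
    have heq : ∑ i ∈ F, P i x - ∑ i ∈ F, P i y = ∑ i ∈ F, P i (x - y) := by
      rw [← Finset.sum_sub_distrib]
      refine Finset.sum_congr rfl fun i _ => ?_
      simp [hP]
    rw [heq]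
    exact hbound F (x - y)
  have h2 : dist (∑ i ∈ F, P i y) (y - ⟪Ω, y⟫_ℂ • Ω) < ε / 4 := hF₀ F hF
  have h3 : dist (y - ⟪Ω, y⟫_ℂ • Ω) (x - ⟪Ω, x⟫_ℂ • Ω) ≤ 2 * ‖x - y‖ := by
    rw [dist_eq_norm]
    have heq : (y - ⟪Ω, y⟫_ℂ • Ω) - (x - ⟪Ω, x⟫_ℂ • Ω) = (y - x) - ⟪Ω, y - x⟫_ℂ • Ω := by
      rw [inner_sub_right, sub_smul]; abel
    rw [heq]
    calc ‖(y - x) - ⟪Ω, y - x⟫_ℂ • Ω‖ ≤ ‖y - x‖ + ‖⟪Ω, y - x⟫_ℂ • Ω‖ := norm_sub_le _ _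
      _ ≤ ‖y - x‖ + ‖⟪Ω, y - x⟫_ℂ‖ * ‖Ω‖ := by rw [norm_smul]
      _ ≤ ‖y - x‖ + (‖Ω‖ * ‖y - x‖) * ‖Ω‖ := by
          gcongr
          exact norm_inner_le_norm Ω (y - x)
      _ = 2 * ‖x - y‖ := by rw [hΩ, norm_sub_rev x y]; ring
  have htri := dist_triangle4 (∑ i ∈ F, P i x) (∑ i ∈ F, P i y)
    (y - ⟪Ω, y⟫_ℂ • Ω) (x - ⟪Ω, x⟫_ℂ • Ω)
  linarith
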